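/- For H_μ = (1/(1−λr²))·[ (px²+py²+pz²)/2 + k1 r² + k2 x + k3 y + k4 z ], the cross function K_xy = px·py + (2k1 x y + k3 x + k2 y) + 2λ x y H_μ satisfies {K_xy, H_μ} = 0. -/

import Mathlib

noncomputable section

/-- Phase space ℝ⁶ with coordinates (x,y,z,px,py,pz). -/
abbrev Pt := Fin 6 → ℝ

/-- Standard basis vector. -/
def e (j : Fin 6) : Pt := Pi.single j 1

/-- Canonical Poisson bracket on ℝ⁶:
{F,G} = Σᵢ (∂F/∂qᵢ ∂G/∂pᵢ − ∂F/∂pᵢ ∂G/∂qᵢ). -/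
def pb (F G : Pt → ℝ) (q : Pt) : ℝ :=
    (fderiv ℝ F q (e 0)) * (fderiv ℝ G q (e 3)) - (fderiv ℝ F q (e 3)) * (fderiv ℝ G q (e 0))
  + (fderiv ℝ F q (e 1)) * (fderiv ℝ G q (e 4)) - (fderiv ℝ F q (e 4)) * (fderiv ℝ G q (e 1))
  + (fderiv ℝ F q (e 2)) * (fderiv ℝ G q (e 5)) - (fderiv ℝ F q (e 5)) * (fderiv ℝ G q (e 2))

/-- H_μ = (1/(1−λr²))·[(px²+py²+pz²)/2 + k1 r² + k2 x + k3 y + k4 z]. -/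
def Hmu (lam k1 k2 k3 k4 : ℝ) (q : Pt) : ℝ :=
  (1 / (1 - lam * (q 0 ^ 2 + q 1 ^ 2 + q 2 ^ 2))) *
    ((q 3 ^ 2 + q 4 ^ 2 + q 5 ^ 2) / 2 + k1 * (q 0 ^ 2 + q 1 ^ 2 + q 2 ^ 2)
      + k2 * q 0 + k3 * q 1 + k4 * q 2)

/-- K_xy = px py + (2k1 x y + k3 x + k2 y) + 2λ x y H_μ. -/
def Kxy (lam k1 k2 k3 k4 : ℝ) (q : Pt) : ℝ :=
  q 3 * q 4 + (2 * k1 * q 0 * q 1 + k3 * q 0 + k2 * q 1)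
    + 2 * lam * q 0 * q 1 * Hmu lam k1 k2 k3 k4 q

lemma key (lam x y z px py pz A B C N D : ℝ) (hD : D ≠ 0) :
    (B + 2 * lam * y * (N / D) + 2 * lam * x * y * ((A * D + 2 * lam * x * N) / D ^ 2)) * (px / D)
    - (py + 2 * lam * x * y * (px / D)) * ((A * D + 2 * lam * x * N) / D ^ 2)
    + (A + 2 * lam * x * (N / D) + 2 * lam * x * y * ((B * D + 2 * lam * y * N) / D ^ 2)) * (py / D)
    - (px + 2 * lam * x * y * (py / D)) * ((B * D + 2 * lam * y * N) / D ^ 2)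
    + 2 * lam * x * y * ((C * D + 2 * lam * z * N) / D ^ 2) * (pz / D)
    - 2 * lam * x * y * (pz / D) * ((C * D + 2 * lam * z * N) / D ^ 2) = 0 := by
  field_simp
  ring

set_option maxHeartbeats 4000000 in
theorem stmt3 (lam k1 k2 k3 k4 : ℝ) :
    ∀ q : Pt, 1 - lam * (q 0 ^ 2 + q 1 ^ 2 + q 2 ^ 2) > 0 →
      pb (Kxy lam k1 k2 k3 k4) (Hmu lam k1 k2 k3 k4) q = 0 := by
  intro q hq
  have hD0 : (1 - lam * (q 0 ^ 2 + q 1 ^ 2 + q 2 ^ 2)) ≠ 0 := ne_of_gt hq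
  set D : ℝ := 1 - lam * (q 0 ^ 2 + q 1 ^ 2 + q 2 ^ 2) with hDdef
  set N : ℝ := (q 3 ^ 2 + q 4 ^ 2 + q 5 ^ 2) / 2 + k1 * (q 0 ^ 2 + q 1 ^ 2 + q 2 ^ 2)
      + k2 * q 0 + k3 * q 1 + k4 * q 2 with hNdef
  have h := fun i : Fin 6 => hasFDerivAt_apply (𝕜 := ℝ) i q
  have hp : ∀ i : Fin 6, HasFDerivAt (fun q : Pt => q i ^ 2)
      ((((2 : ℕ) : ℝ) * q i ^ 1) • (ContinuousLinearMap.proj i : Pt →L[ℝ] ℝ)) q :=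
    fun i => by have := HasDerivAt.comp_hasFDerivAt q (hasDerivAt_pow 2 (q i)) (h i); exact this
  have hr : HasFDerivAt (fun q : Pt => q 0 ^ 2 + q 1 ^ 2 + q 2 ^ 2) _ q :=
    ((hp 0).add (hp 1)).add (hp 2)
  have hD : HasFDerivAt (fun q : Pt => 1 - lam * (q 0 ^ 2 + q 1 ^ 2 + q 2 ^ 2)) _ q :=
    (hasFDerivAt_const 1 q).sub (hr.const_mul lam)
  have hinv : HasDerivAt (fun t : ℝ => 1 / t) (-(D ^ 2)⁻¹) D := by
    simpa [one_div] using hasDerivAt_inv hD0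
  have hinvD : HasFDerivAt (fun q : Pt => 1 / (1 - lam * (q 0 ^ 2 + q 1 ^ 2 + q 2 ^ 2))) _ q :=
    HasDerivAt.comp_hasFDerivAt q hinv hD
  have hN : HasFDerivAt (fun q : Pt =>
      (q 3 ^ 2 + q 4 ^ 2 + q 5 ^ 2) / 2 + k1 * (q 0 ^ 2 + q 1 ^ 2 + q 2 ^ 2)
        + k2 * q 0 + k3 * q 1 + k4 * q 2) _ q :=
    (((((((hp 3).add (hp 4)).add (hp 5)).mul_const ((2:ℝ)⁻¹)).add (hr.const_mul k1)).add
      ((h 0).const_mul k2)).add ((h 1).const_mul k3)).add ((h 2).const_mul k4)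
  have hH : HasFDerivAt (Hmu lam k1 k2 k3 k4) _ q := hinvD.mul hN
  have hK : HasFDerivAt (Kxy lam k1 k2 k3 k4) _ q :=
    (((h 3).mul (h 4)).add
      (((((h 0).const_mul (2 * k1)).mul (h 1)).add ((h 0).const_mul k3)).add
        ((h 1).const_mul k2))).add ((((h 0).const_mul (2 * lam)).mul (h 1)).mul hH)
  have hHval : Hmu lam k1 k2 k3 k4 q = (1 / D) * N := rfl
  have EH := hH.fderiv
  have EK := hK.fderiv
  have H0 : fderiv ℝ (Hmu lam k1 k2 k3 k4) q (e 0)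
      = ((2 * k1 * q 0 + k2) * D + 2 * lam * q 0 * N) / D ^ 2 := by
    rw [EH]; simp only [ContinuousLinearMap.add_apply, ContinuousLinearMap.smul_apply,
      ContinuousLinearMap.sub_apply, ContinuousLinearMap.zero_apply, ContinuousLinearMap.neg_apply,
      ContinuousLinearMap.proj_apply, smul_eq_mul, e, Pi.single_apply, Fin.reduceEq, reduceIte,
      Nat.cast_ofNat, pow_one, mul_one, mul_zero, zero_mul, add_zero, zero_add, sub_zero,
      zero_sub, neg_zero, neg_mul, mul_neg, neg_neg, if_true, if_false]
    simp only [← hDdef]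
    field_simp; ring
  have H1 : fderiv ℝ (Hmu lam k1 k2 k3 k4) q (e 1)
      = ((2 * k1 * q 1 + k3) * D + 2 * lam * q 1 * N) / D ^ 2 := by
    rw [EH]; simp only [ContinuousLinearMap.add_apply, ContinuousLinearMap.smul_apply,
      ContinuousLinearMap.sub_apply, ContinuousLinearMap.zero_apply, ContinuousLinearMap.neg_apply,
      ContinuousLinearMap.proj_apply, smul_eq_mul, e, Pi.single_apply, Fin.reduceEq, reduceIte,
      Nat.cast_ofNat, pow_one, mul_one, mul_zero, zero_mul, add_zero, zero_add, sub_zero,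
      zero_sub, neg_zero, neg_mul, mul_neg, neg_neg, if_true, if_false]
    simp only [← hDdef]
    field_simp; ring
  have H2 : fderiv ℝ (Hmu lam k1 k2 k3 k4) q (e 2)
      = ((2 * k1 * q 2 + k4) * D + 2 * lam * q 2 * N) / D ^ 2 := by
    rw [EH]; simp only [ContinuousLinearMap.add_apply, ContinuousLinearMap.smul_apply,
      ContinuousLinearMap.sub_apply, ContinuousLinearMap.zero_apply, ContinuousLinearMap.neg_apply,
      ContinuousLinearMap.proj_apply, smul_eq_mul, e, Pi.single_apply, Fin.reduceEq, reduceIte,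
      Nat.cast_ofNat, pow_one, mul_one, mul_zero, zero_mul, add_zero, zero_add, sub_zero,
      zero_sub, neg_zero, neg_mul, mul_neg, neg_neg, if_true, if_false]
    simp only [← hDdef]
    field_simp; ring
  have H3 : fderiv ℝ (Hmu lam k1 k2 k3 k4) q (e 3) = q 3 / D := by
    rw [EH]; simp only [ContinuousLinearMap.add_apply, ContinuousLinearMap.smul_apply,
      ContinuousLinearMap.sub_apply, ContinuousLinearMap.zero_apply, ContinuousLinearMap.neg_apply,
      ContinuousLinearMap.proj_apply, smul_eq_mul, e, Pi.single_apply, Fin.reduceEq, reduceIte,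
      Nat.cast_ofNat, pow_one, mul_one, mul_zero, zero_mul, add_zero, zero_add, sub_zero,
      zero_sub, neg_zero, neg_mul, mul_neg, neg_neg, if_true, if_false]
    simp only [← hDdef]
    field_simp
  have H4 : fderiv ℝ (Hmu lam k1 k2 k3 k4) q (e 4) = q 4 / D := by
    rw [EH]; simp only [ContinuousLinearMap.add_apply, ContinuousLinearMap.smul_apply,
      ContinuousLinearMap.sub_apply, ContinuousLinearMap.zero_apply, ContinuousLinearMap.neg_apply,
      ContinuousLinearMap.proj_apply, smul_eq_mul, e, Pi.single_apply, Fin.reduceEq, reduceIte,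
      Nat.cast_ofNat, pow_one, mul_one, mul_zero, zero_mul, add_zero, zero_add, sub_zero,
      zero_sub, neg_zero, neg_mul, mul_neg, neg_neg, if_true, if_false]
    simp only [← hDdef]
    field_simp
  have H5 : fderiv ℝ (Hmu lam k1 k2 k3 k4) q (e 5) = q 5 / D := by
    rw [EH]; simp only [ContinuousLinearMap.add_apply, ContinuousLinearMap.smul_apply,
      ContinuousLinearMap.sub_apply, ContinuousLinearMap.zero_apply, ContinuousLinearMap.neg_apply,
      ContinuousLinearMap.proj_apply, smul_eq_mul, e, Pi.single_apply, Fin.reduceEq, reduceIte,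
      Nat.cast_ofNat, pow_one, mul_one, mul_zero, zero_mul, add_zero, zero_add, sub_zero,
      zero_sub, neg_zero, neg_mul, mul_neg, neg_neg, if_true, if_false]
    simp only [← hDdef]
    field_simp
  have K0 : fderiv ℝ (Kxy lam k1 k2 k3 k4) q (e 0)
      = 2 * k1 * q 1 + k3 + 2 * lam * q 1 * (N / D)
        + 2 * lam * q 0 * q 1 * (((2 * k1 * q 0 + k2) * D + 2 * lam * q 0 * N) / D ^ 2) := by
    rw [EK]; simp only [ContinuousLinearMap.add_apply, ContinuousLinearMap.smul_apply,
      ContinuousLinearMap.sub_apply, ContinuousLinearMap.zero_apply, ContinuousLinearMap.neg_apply,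
      ContinuousLinearMap.proj_apply, smul_eq_mul, e, Pi.single_apply, Fin.reduceEq, reduceIte,
      Nat.cast_ofNat, pow_one, mul_one, mul_zero, zero_mul, add_zero, zero_add, sub_zero,
      zero_sub, neg_zero, neg_mul, mul_neg, neg_neg, if_true, if_false]
    try simp only [hHval]
    simp only [← hDdef, Pi.mul_apply]
    field_simp; ring
  have K1 : fderiv ℝ (Kxy lam k1 k2 k3 k4) q (e 1)
      = 2 * k1 * q 0 + k2 + 2 * lam * q 0 * (N / D)
        + 2 * lam * q 0 * q 1 * (((2 * k1 * q 1 + k3) * D + 2 * lam * q 1 * N) / D ^ 2) := by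
    rw [EK]; simp only [ContinuousLinearMap.add_apply, ContinuousLinearMap.smul_apply,
      ContinuousLinearMap.sub_apply, ContinuousLinearMap.zero_apply, ContinuousLinearMap.neg_apply,
      ContinuousLinearMap.proj_apply, smul_eq_mul, e, Pi.single_apply, Fin.reduceEq, reduceIte,
      Nat.cast_ofNat, pow_one, mul_one, mul_zero, zero_mul, add_zero, zero_add, sub_zero,
      zero_sub, neg_zero, neg_mul, mul_neg, neg_neg, if_true, if_false]
    try simp only [hHval]
    simp only [← hDdef, Pi.mul_apply]
    field_simp; ring
  have K2 : fderiv ℝ (Kxy lam k1 k2 k3 k4) q (e 2)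
      = 2 * lam * q 0 * q 1 * (((2 * k1 * q 2 + k4) * D + 2 * lam * q 2 * N) / D ^ 2) := by
    rw [EK]; simp only [ContinuousLinearMap.add_apply, ContinuousLinearMap.smul_apply,
      ContinuousLinearMap.sub_apply, ContinuousLinearMap.zero_apply, ContinuousLinearMap.neg_apply,
      ContinuousLinearMap.proj_apply, smul_eq_mul, e, Pi.single_apply, Fin.reduceEq, reduceIte,
      Nat.cast_ofNat, pow_one, mul_one, mul_zero, zero_mul, add_zero, zero_add, sub_zero,
      zero_sub, neg_zero, neg_mul, mul_neg, neg_neg, if_true, if_false]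
    try simp only [hHval]
    simp only [← hDdef, Pi.mul_apply]
    field_simp; ring
  have K3 : fderiv ℝ (Kxy lam k1 k2 k3 k4) q (e 3)
      = q 4 + 2 * lam * q 0 * q 1 * (q 3 / D) := by
    rw [EK]; simp only [ContinuousLinearMap.add_apply, ContinuousLinearMap.smul_apply,
      ContinuousLinearMap.sub_apply, ContinuousLinearMap.zero_apply, ContinuousLinearMap.neg_apply,
      ContinuousLinearMap.proj_apply, smul_eq_mul, e, Pi.single_apply, Fin.reduceEq, reduceIte,
      Nat.cast_ofNat, pow_one, mul_one, mul_zero, zero_mul, add_zero, zero_add, sub_zero,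
      zero_sub, neg_zero, neg_mul, mul_neg, neg_neg, if_true, if_false]
    try simp only [hHval]
    simp only [← hDdef, Pi.mul_apply]
    field_simp
  have K4 : fderiv ℝ (Kxy lam k1 k2 k3 k4) q (e 4)
      = q 3 + 2 * lam * q 0 * q 1 * (q 4 / D) := by
    rw [EK]; simp only [ContinuousLinearMap.add_apply, ContinuousLinearMap.smul_apply,
      ContinuousLinearMap.sub_apply, ContinuousLinearMap.zero_apply, ContinuousLinearMap.neg_apply,
      ContinuousLinearMap.proj_apply, smul_eq_mul, e, Pi.single_apply, Fin.reduceEq, reduceIte,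
      Nat.cast_ofNat, pow_one, mul_one, mul_zero, zero_mul, add_zero, zero_add, sub_zero,
      zero_sub, neg_zero, neg_mul, mul_neg, neg_neg, if_true, if_false]
    try simp only [hHval]
    simp only [← hDdef, Pi.mul_apply]
    field_simp
  have K5 : fderiv ℝ (Kxy lam k1 k2 k3 k4) q (e 5)
      = 2 * lam * q 0 * q 1 * (q 5 / D) := by
    rw [EK]; simp only [ContinuousLinearMap.add_apply, ContinuousLinearMap.smul_apply,
      ContinuousLinearMap.sub_apply, ContinuousLinearMap.zero_apply, ContinuousLinearMap.neg_apply,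
      ContinuousLinearMap.proj_apply, smul_eq_mul, e, Pi.single_apply, Fin.reduceEq, reduceIte,
      Nat.cast_ofNat, pow_one, mul_one, mul_zero, zero_mul, add_zero, zero_add, sub_zero,
      zero_sub, neg_zero, neg_mul, mul_neg, neg_neg, if_true, if_false]
    try simp only [hHval]
    simp only [← hDdef, Pi.mul_apply]
    field_simp
  rw [pb, H0, H1, H2, H3, H4, H5, K0, K1, K2, K3, K4, K5]
  exact key lam (q 0) (q 1) (q 2) (q 3) (q 4) (q 5) (2 * k1 * q 0 + k2) (2 * k1 * q 1 + k3)
    (2 * k1 * q 2 + k4) N D hD0
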